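/- arXiv:1504.00777 — 7 statements merged into one kernel-verified Lean document; each statement's English description precedes it below -/
import Mathlib

section
/- Let h > 0. For all j, k ∈ ℤ one has ∫_0^1 u_j(x)·conj(v_k(x)) dx = 1 if j = k and 0 if j ≠ k. Consequently the system {u_j : j ∈ ℤ} is minimal in L²(0,1): for every j ∈ ℤ, u_j does not belong to the closure in L²(0,1) of the linear span of {u_k : k ∈ ℤ, k ≠ j}. -/
open Complex MeasureTheory Set

noncomputable section

/-- The eigenfunction `u j x = h^x e^{2π i j x}` of the operator `O_h^(1)`. -/
def uFun (h : ℝ) (j : ℤ) (x : ℝ) : ℂ :=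
  Complex.exp ((x : ℂ) * Real.log h) *
    Complex.exp (2 * Real.pi * Complex.I * (j : ℂ) * (x : ℂ))

/-- The biorthogonal function `v j x = h^{-x} e^{2π i j x}`. -/
def vFun (h : ℝ) (j : ℤ) (x : ℝ) : ℂ :=
  Complex.exp (-((x : ℂ) * Real.log h)) *
    Complex.exp (2 * Real.pi * Complex.I * (j : ℂ) * (x : ℂ))

lemma uFun_mul_conj_vFun (h : ℝ) (j k : ℤ) (x : ℝ) :
    uFun h j x * (starRingEnd ℂ) (vFun h k x)
      = Complex.exp ((((j:ℂ) - k) * (2 * Real.pi * Complex.I)) * x) := by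
  unfold uFun vFun
  rw [map_mul, ← Complex.exp_conj, ← Complex.exp_conj]
  rw [← Complex.exp_add, ← Complex.exp_add, ← Complex.exp_add]
  congr 1
  simp only [map_neg, map_mul, Complex.conj_ofReal, Complex.conj_I, map_ofNat, map_intCast]
  ring

lemma orth (h : ℝ) (j k : ℤ) :
    (∫ x in (0:ℝ)..1, uFun h j x * (starRingEnd ℂ) (vFun h k x)) =
        if j = k then 1 else 0 := by
  simp only [uFun_mul_conj_vFun]
  rcases eq_or_ne j k with rfl | hjk
  · simp
  · rw [if_neg hjk]
    have hc : (((j:ℂ) - k) * (2 * Real.pi * Complex.I)) ≠ 0 := by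
      apply mul_ne_zero
      · simpa [sub_eq_zero] using fun hx => hjk (by exact_mod_cast hx)
      · simp [Real.pi_ne_zero, Complex.I_ne_zero, Complex.ofReal_ne_zero]
    rw [integral_exp_mul_complex hc]
    have h1 : Complex.exp (((j:ℂ) - k) * (2 * Real.pi * Complex.I) * (1:ℝ)) = 1 := by
      have := Complex.exp_int_mul_two_pi_mul_I (j - k)
      push_cast at this ⊢
      rw [mul_one]; exact this
    have h0 : Complex.exp (((j:ℂ) - k) * (2 * Real.pi * Complex.I) * (0:ℝ)) = 1 := by
      norm_num
    rw [h1, h0]; simp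

lemma vFun_memℒp (h : ℝ) (j : ℤ) :
    MemLp (vFun h j) 2 (volume.restrict (Ioo (0:ℝ) 1)) := by
  have hcont : Continuous (vFun h j) := by unfold vFun; fun_prop
  apply MemLp.of_bound hcont.aestronglyMeasurable (Real.exp |Real.log h|)
  filter_upwards [ae_restrict_mem measurableSet_Ioo] with x hx
  have hnorm : ‖vFun h j x‖ = Real.exp (-(x * Real.log h)) := by
    simp [vFun, Complex.norm_exp]
  rw [hnorm]
  apply Real.exp_le_exp.mpr
  calc -(x * Real.log h) ≤ |x * Real.log h| := neg_le_abs _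
    _ = x * |Real.log h| := by rw [abs_mul, abs_of_pos hx.1]
    _ ≤ 1 * |Real.log h| := by
        apply mul_le_mul_of_nonneg_right hx.2.le (abs_nonneg _)
    _ = |Real.log h| := one_mul _

theorem stmt_1 (h : ℝ) (hh : 0 < h) :
    (∀ j k : ℤ,
      (∫ x in (0:ℝ)..1, uFun h j x * (starRingEnd ℂ) (vFun h k x)) =
        if j = k then 1 else 0) ∧
    (∀ U : ℤ → Lp ℂ 2 (volume.restrict (Ioo (0:ℝ) 1)),
      (∀ j, ⇑(U j) =ᵐ[volume.restrict (Ioo (0:ℝ) 1)] uFun h j) →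
      ∀ j : ℤ,
        U j ∉ closure ((Submodule.span ℂ (U '' {k : ℤ | k ≠ j}) :
          Submodule ℂ (Lp ℂ 2 (volume.restrict (Ioo (0:ℝ) 1)))) : Set _)) := by
  constructor
  · exact orth h
  · intro U hU j hmem
    let μ := volume.restrict (Ioo (0:ℝ) 1)
    let V : Lp ℂ 2 μ := (vFun_memℒp h j).toLp (vFun h j)
    -- key computation of inner products
    have hinner : ∀ k : ℤ, (inner ℂ V (U k) : ℂ) = if k = j then 1 else 0 := by
      intro k
      rw [MeasureTheory.L2.inner_def]
      have hae : (fun a => (inner ℂ (V a) (U k a) : ℂ))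
          =ᵐ[μ] fun a => uFun h k a * (starRingEnd ℂ) (vFun h j a) := by
        filter_upwards [(vFun_memℒp h j).coeFn_toLp, hU k] with a h1 h2
        rw [RCLike.inner_apply, h1, h2, mul_comm]
      rw [integral_congr_ae hae]
      have : (∫ a, uFun h k a * (starRingEnd ℂ) (vFun h j a) ∂μ)
          = ∫ x in (0:ℝ)..1, uFun h k x * (starRingEnd ℂ) (vFun h j x) := by
        rw [intervalIntegral.integral_of_le zero_le_one,
          MeasureTheory.integral_Ioc_eq_integral_Ioo]
      rw [this, orth]
    -- the inner-product functional vanishes on the closure of the span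
    have hclosed : IsClosed {x : Lp ℂ 2 μ | (inner ℂ V x : ℂ) = 0} := by
      have : Continuous fun x : Lp ℂ 2 μ => (inner ℂ V x : ℂ) := (innerSL ℂ V).continuous
      exact isClosed_eq this continuous_const
    have hspan : (↑(Submodule.span ℂ (U '' {k : ℤ | k ≠ j})) : Set (Lp ℂ 2 μ)) ⊆
        {x : Lp ℂ 2 μ | (inner ℂ V x : ℂ) = 0} := by
      intro x hx
      induction hx using Submodule.span_induction with
      | mem y hy =>
          obtain ⟨k, hk, rfl⟩ := hy
          simp only [mem_setOf_eq] at hk ⊢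
          rw [hinner k, if_neg hk]
      | zero => simp
      | add y z _ _ hy hz =>
          simp only [mem_setOf_eq] at hy hz ⊢
          rw [inner_add_right, hy, hz, add_zero]
      | smul c y _ hy =>
          simp only [mem_setOf_eq] at hy ⊢
          rw [inner_smul_right, hy, mul_zero]
    have : U j ∈ {x : Lp ℂ 2 μ | (inner ℂ V x : ℂ) = 0} :=
      closure_minimal hspan hclosed hmem
    have this : (inner ℂ V (U j) : ℂ) = 0 := this
    rw [hinner j, if_pos rfl] at this
    exact one_ne_zero this
end
end

section
/- Let h > 0, let λ ∈ ℂ satisfy Δ(λ) := h − e^{iλ} ≠ 0, and let f : [0,1] → ℂ be continuous. Define g(x) = (i/Δ(λ))·e^{iλ(x+1)}·∫_0^1 e^{−iλt} f(t) dt + i·e^{iλx}·∫_0^x e^{−iλt} f(t) dt for x ∈ [0,1]. Then g is continuously differentiable on [0,1], satisfies −i·g′(x) − λ·g(x) = f(x) for all x ∈ [0,1], and satisfies the boundary condition h·g(0) = g(1). In other words, g = (O_h^(1) − λI)^{−1} f. -/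
open Complex MeasureTheory Set

noncomputable section

/-- The resolvent `(O_h^(1) - λ I)^{-1} f` of the operator `O_h^(1)`. -/
def resolventFun (h : ℝ) (lam : ℂ) (f : ℝ → ℂ) (x : ℝ) : ℂ :=
  Complex.I / ((h : ℂ) - Complex.exp (Complex.I * lam)) *
      Complex.exp (Complex.I * lam * ((x : ℂ) + 1)) *
      (∫ t in (0:ℝ)..1, Complex.exp (-(Complex.I * lam * (t : ℂ))) * f t) +
    Complex.I * Complex.exp (Complex.I * lam * (x : ℂ)) *
      (∫ t in (0:ℝ)..x, Complex.exp (-(Complex.I * lam * (t : ℂ))) * f t)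

set_option maxHeartbeats 1000000 in
theorem stmt_3 (h : ℝ) (hh : 0 < h) (lam : ℂ)
    (hΔ : (h : ℂ) - Complex.exp (Complex.I * lam) ≠ 0)
    (f : ℝ → ℂ) (hf : ContinuousOn f (Icc 0 1)) :
    ∃ g' : ℝ → ℂ,
      ContinuousOn g' (Icc (0:ℝ) 1) ∧
      (∀ x ∈ Icc (0:ℝ) 1,
        HasDerivWithinAt (resolventFun h lam f) (g' x) (Icc (0:ℝ) 1) x) ∧
      (∀ x ∈ Icc (0:ℝ) 1,
        -Complex.I * g' x - lam * resolventFun h lam f x = f x) ∧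
      (h : ℂ) * resolventFun h lam f 0 = resolventFun h lam f 1 := by
  -- continuous extension of f to all of ℝ
  set fc : ℝ → ℂ := fun x => f ((projIcc (0:ℝ) 1 zero_le_one x : ℝ)) with hfc_def
  have hfc : Continuous fc := by
    have : Continuous ((Icc (0:ℝ) 1).restrict f) := hf.restrict
    exact this.comp continuous_projIcc
  have hfc_eq : ∀ x ∈ Icc (0:ℝ) 1, fc x = f x := by
    intro x hx
    simp [hfc_def, projIcc_of_mem zero_le_one hx]
  -- integrals with fc agree with integrals with f on [0,1]
  have hint_eq : ∀ x ∈ Icc (0:ℝ) 1,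
      (∫ t in (0:ℝ)..x, Complex.exp (-(Complex.I * lam * (t : ℂ))) * fc t)
        = ∫ t in (0:ℝ)..x, Complex.exp (-(Complex.I * lam * (t : ℂ))) * f t := by
    intro x hx
    apply intervalIntegral.integral_congr
    intro t ht
    rw [uIcc_of_le hx.1] at ht
    simp only [hfc_eq t ⟨ht.1, ht.2.trans hx.2⟩]
  have hres_eq : ∀ x ∈ Icc (0:ℝ) 1,
      resolventFun h lam fc x = resolventFun h lam f x := by
    intro x hx
    unfold resolventFun
    rw [hint_eq x hx, hint_eq 1 ⟨zero_le_one, le_refl 1⟩]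
  have hc1 : Continuous (fun t : ℝ => -(Complex.I * lam * (t : ℂ))) :=
    (continuous_const.mul Complex.continuous_ofReal).neg
  have hc2 : Continuous (fun x : ℝ => Complex.I * lam * ((x : ℂ) + 1)) :=
    continuous_const.mul (Complex.continuous_ofReal.add continuous_const)
  have hc3 : Continuous (fun x : ℝ => Complex.I * lam * (x : ℂ)) :=
    continuous_const.mul Complex.continuous_ofReal
  -- the candidate derivative
  refine ⟨fun x => Complex.I * lam * resolventFun h lam fc x + Complex.I * fc x, ?_, ?_, ?_, ?_⟩
  -- continuity pieces
  · have hcont_integrand : Continuous (fun t : ℝ => Complex.exp (-(Complex.I * lam * (t : ℂ))) * fc t) := by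
      exact (Complex.continuous_exp.comp hc1).mul hfc
    have hF : Continuous (fun x : ℝ => ∫ t in (0:ℝ)..x, Complex.exp (-(Complex.I * lam * (t : ℂ))) * fc t) :=
      intervalIntegral.continuous_primitive (fun a b => hcont_integrand.intervalIntegrable a b) 0
    have hres : Continuous (resolventFun h lam fc) := by
      unfold resolventFun
      apply Continuous.add
      · exact (continuous_const.mul (Complex.continuous_exp.comp hc2)).mul continuous_const
      · exact (continuous_const.mul (Complex.continuous_exp.comp hc3)).mul hF
    exact ((continuous_const.mul hres).add (continuous_const.mul hfc)).continuousOn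
  -- derivative
  · intro x hx
    have hcont_integrand : Continuous (fun t : ℝ => Complex.exp (-(Complex.I * lam * (t : ℂ))) * fc t) := by
      exact (Complex.continuous_exp.comp hc1).mul hfc
    have hF : HasDerivAt (fun x : ℝ => ∫ t in (0:ℝ)..x, Complex.exp (-(Complex.I * lam * (t : ℂ))) * fc t)
        (Complex.exp (-(Complex.I * lam * (x : ℂ))) * fc x) x :=
      intervalIntegral.integral_hasDerivAt_right (hcont_integrand.intervalIntegrable 0 x)
        hcont_integrand.aestronglyMeasurable.stronglyMeasurableAtFilter hcont_integrand.continuousAt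
    have he1 : HasDerivAt (fun x : ℝ => Complex.exp (Complex.I * lam * ((x : ℂ) + 1)))
        (Complex.I * lam * Complex.exp (Complex.I * lam * ((x : ℂ) + 1))) x := by
      have hinner : HasDerivAt (fun x : ℝ => Complex.I * lam * ((x : ℂ) + 1)) (Complex.I * lam) x := by
        simpa using ((Complex.ofRealCLM.hasDerivAt (x := x)).add_const 1).const_mul (Complex.I * lam)
      simpa [mul_comm] using hinner.cexp
    have he2 : HasDerivAt (fun x : ℝ => Complex.exp (Complex.I * lam * (x : ℂ)))
        (Complex.I * lam * Complex.exp (Complex.I * lam * (x : ℂ))) x := by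
      have hinner : HasDerivAt (fun x : ℝ => Complex.I * lam * (x : ℂ)) (Complex.I * lam) x := by
        simpa using (Complex.ofRealCLM.hasDerivAt (x := x)).const_mul (Complex.I * lam)
      simpa [mul_comm] using hinner.cexp
    have hD : HasDerivAt (resolventFun h lam fc)
        (Complex.I * lam * resolventFun h lam fc x + Complex.I * fc x) x := by
      have h1 := ((he1.const_mul
          (Complex.I / ((h : ℂ) - Complex.exp (Complex.I * lam)))).mul_const
          (∫ t in (0:ℝ)..1, Complex.exp (-(Complex.I * lam * (t : ℂ))) * fc t))
      have h2 := (he2.const_mul Complex.I).mul hF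
      have := h1.add h2
      refine this.congr_deriv ?_
      unfold resolventFun
      have hxx : Complex.exp (Complex.I * lam * (x : ℂ)) *
          Complex.exp (-(Complex.I * lam * (x : ℂ))) = 1 := by
        rw [← Complex.exp_add, add_neg_cancel, Complex.exp_zero]
      linear_combination (Complex.I * fc x) * hxx
    have : HasDerivWithinAt (resolventFun h lam fc)
        (Complex.I * lam * resolventFun h lam fc x + Complex.I * fc x) (Icc (0:ℝ) 1) x :=
      hD.hasDerivWithinAt
    exact this.congr (fun y hy => (hres_eq y hy).symm) (hres_eq x hx).symm
  -- the ODE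
  · intro x hx
    dsimp only
    rw [hres_eq x hx, hfc_eq x hx]
    ring_nf
    rw [Complex.I_sq]
    ring
  -- boundary condition
  · unfold resolventFun
    rw [intervalIntegral.integral_same]
    set C := ∫ t in (0:ℝ)..1, Complex.exp (-(Complex.I * lam * (t : ℂ))) * f t
    have h01 : Complex.exp (Complex.I * lam * ((0:ℂ) + 1)) = Complex.exp (Complex.I * lam) := by
      norm_num
    have h11 : Complex.exp (Complex.I * lam * ((1:ℂ) + 1)) =
        Complex.exp (Complex.I * lam) * Complex.exp (Complex.I * lam) := by
      rw [← Complex.exp_add]; ring_nf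
    have h1 : Complex.exp (Complex.I * lam * (1:ℂ)) = Complex.exp (Complex.I * lam) := by
      rw [mul_one]
    push_cast
    rw [h01, h11, h1]
    field_simp
    ring
end
end

section
/- Plancherel identity for biorthogonal expansions: let (u_ξ)_{ξ∈I} and (v_ξ)_{ξ∈I} be biorthogonal families in L²(Ω), and let f ∈ L²(Ω) be such that the family (f̂(ξ)·u_ξ)_{ξ∈I} has sum f in L²(Ω) and the family (f̂_*(ξ)·v_ξ)_{ξ∈I} has sum f in L²(Ω). Then the families (f̂(ξ)·conj(f̂_*(ξ)))_{ξ∈I} and (f̂_*(ξ)·conj(f̂(ξ)))_{ξ∈I} are summable, both sums are equal to ‖f‖²_{L²(Ω)}, and in particular Σ_{ξ∈I} f̂(ξ)·conj(f̂_*(ξ)) is a nonnegative real number. -/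
open Complex MeasureTheory Set

noncomputable section

theorem stmt_8 {n : ℕ} (Ω : Set (Fin n → ℝ)) (hΩo : IsOpen Ω)
    (hΩb : Bornology.IsBounded Ω)
    {ι : Type*} [Countable ι] [DecidableEq ι]
    (u v : ι → Lp ℂ 2 (volume.restrict Ω))
    (hbi : ∀ ξ η : ι, (inner ℂ (v η) (u ξ) : ℂ) = if ξ = η then 1 else 0)
    (f : Lp ℂ 2 (volume.restrict Ω))
    (hf : HasSum (fun ξ => (inner ℂ (v ξ) f : ℂ) • u ξ) f)
    (hf' : HasSum (fun ξ => (inner ℂ (u ξ) f : ℂ) • v ξ) f) :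
    HasSum (fun ξ => (inner ℂ (v ξ) f : ℂ) * (starRingEnd ℂ) (inner ℂ (u ξ) f : ℂ))
      ((‖f‖ ^ 2 : ℝ) : ℂ) ∧
    HasSum (fun ξ => (inner ℂ (u ξ) f : ℂ) * (starRingEnd ℂ) (inner ℂ (v ξ) f : ℂ))
      ((‖f‖ ^ 2 : ℝ) : ℂ) := by
  have h1 := (innerSL ℂ f).hasSum hf
  have h2 := (innerSL ℂ f).hasSum hf'
  simp only [innerSL_apply_apply, inner_smul_right, inner_self_eq_norm_sq_to_K] at h1 h2
  constructor
  · convert h1 using 2 with ξ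
    · rfl
    · rw [← inner_conj_symm f (u ξ)]
    · push_cast
      norm_num [RCLike.ofReal_pow]
  · convert h2 using 2 with ξ
    · rfl
    · rw [← inner_conj_symm f (v ξ)]
    · push_cast
      norm_num [RCLike.ofReal_pow]
end
end

section
/- Let (u_ξ)_{ξ∈I} be a Riesz basis of L²(Ω) with biorthogonal family (v_ξ)_{ξ∈I}. Then for all f, g ∈ L²(Ω) the family (f̂(ξ)·ĝ(ξ))_{ξ∈I} is square-summable and the series Σ_{ξ∈I} f̂(ξ)·ĝ(ξ)·u_ξ converges in L²(Ω); denoting its sum by f ⋆_L g, one has ⟨f ⋆_L g, v_η⟩ = f̂(η)·ĝ(η) for every η ∈ I, and the L-convolution is commutative: f ⋆_L g = g ⋆_L f. -/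
open Complex MeasureTheory Set

noncomputable section

/-- The Riesz basis `u_ξ = T (e_ξ)` built from an orthonormal Hilbert basis `e`
and a continuous linear isomorphism `T`. -/
def uSys {H : Type*} [NormedAddCommGroup H] [InnerProductSpace ℂ H] [CompleteSpace H]
    {ι : Type*} (e : HilbertBasis ι ℂ H) (T : H ≃L[ℂ] H) (ξ : ι) : H :=
  T (e ξ)

/-- The biorthogonal family `v_ξ = (T⁻¹)* (e_ξ)`. -/
def vSys {H : Type*} [NormedAddCommGroup H] [InnerProductSpace ℂ H] [CompleteSpace H]
    {ι : Type*} (e : HilbertBasis ι ℂ H) (T : H ≃L[ℂ] H) (ξ : ι) : H :=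
  ContinuousLinearMap.adjoint (T.symm : H →L[ℂ] H) (e ξ)

lemma inner_vSys {H : Type*} [NormedAddCommGroup H] [InnerProductSpace ℂ H] [CompleteSpace H]
    {ι : Type*} (e : HilbertBasis ι ℂ H) (T : H ≃L[ℂ] H) (ξ : ι) (x : H) :
    (inner ℂ (vSys e T ξ) x : ℂ) = e.repr (T.symm x) ξ := by
  rw [vSys, ContinuousLinearMap.adjoint_inner_left, e.repr_apply_apply]
  rfl

theorem stmt_10 {n : ℕ} (Ω : Set (Fin n → ℝ)) (hΩo : IsOpen Ω)
    (hΩb : Bornology.IsBounded Ω)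
    {ι : Type*} [Countable ι]
    (e : HilbertBasis ι ℂ (Lp ℂ 2 (volume.restrict Ω)))
    (T : Lp ℂ 2 (volume.restrict Ω) ≃L[ℂ] Lp ℂ 2 (volume.restrict Ω))
    (f g : Lp ℂ 2 (volume.restrict Ω)) :
    Summable (fun ξ =>
      ‖(inner ℂ (vSys e T ξ) f : ℂ) * (inner ℂ (vSys e T ξ) g : ℂ)‖ ^ 2) ∧
    ∃ S : Lp ℂ 2 (volume.restrict Ω),
      HasSum (fun ξ =>
        ((inner ℂ (vSys e T ξ) f : ℂ) * (inner ℂ (vSys e T ξ) g : ℂ)) • uSys e T ξ) S ∧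
      (∀ η, (inner ℂ (vSys e T η) S : ℂ) =
        (inner ℂ (vSys e T η) f : ℂ) * (inner ℂ (vSys e T η) g : ℂ)) ∧
      HasSum (fun ξ =>
        ((inner ℂ (vSys e T ξ) g : ℂ) * (inner ℂ (vSys e T ξ) f : ℂ)) • uSys e T ξ) S := by
  set F := e.repr (T.symm f) with hF
  set G := e.repr (T.symm g) with hG
  set c : ι → ℂ := fun ξ => F ξ * G ξ with hc
  have hrw : ∀ ξ, (inner ℂ (vSys e T ξ) f : ℂ) * (inner ℂ (vSys e T ξ) g : ℂ) = c ξ := by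
    intro ξ; simp [inner_vSys, hc, hF, hG]
  -- Summability of ‖F ξ‖^2
  have hFs : Summable fun ξ => ‖F ξ‖ ^ 2 := by
    have := (lp.memℓp F).summable (p := 2) (by norm_num)
    simpa [ENNReal.toReal_ofNat, Real.rpow_natCast] using this
  have hsum : Summable fun ξ => ‖c ξ‖ ^ 2 := by
    refine Summable.of_nonneg_of_le (fun ξ => by positivity)
      (fun ξ => ?_) (hFs.mul_left (‖G‖ ^ 2))
    have hGle : ‖G ξ‖ ≤ ‖G‖ := lp.norm_apply_le_norm (by norm_num) G ξ
    calc ‖c ξ‖ ^ 2 = ‖F ξ‖ ^ 2 * ‖G ξ‖ ^ 2 := by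
          rw [hc]; simp [norm_mul, mul_pow]
      _ ≤ ‖F ξ‖ ^ 2 * ‖G‖ ^ 2 := by
          gcongr
      _ = ‖G‖ ^ 2 * ‖F ξ‖ ^ 2 := mul_comm _ _
  have hmem : Memℓp c 2 := by
    apply memℓp_gen
    simpa [ENNReal.toReal_ofNat, Real.rpow_natCast] using hsum
  set cl : lp (fun _ : ι => ℂ) 2 := ⟨c, hmem⟩ with hcl
  set h := e.repr.symm cl with hh
  have hhs : HasSum (fun ξ => c ξ • e ξ) h := by
    simpa using e.hasSum_repr_symm cl
  refine ⟨by simpa [hrw] using hsum, T h, ?_, ?_, ?_⟩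
  · have := hhs.mapL (T : Lp ℂ 2 (volume.restrict Ω) →L[ℂ] Lp ℂ 2 (volume.restrict Ω))
    simpa [hrw, uSys] using this
  · intro η
    rw [inner_vSys, hrw]
    have : T.symm (T h) = h := T.symm_apply_apply h
    rw [this, hh, e.repr.apply_symm_apply]
  · have := hhs.mapL (T : Lp ℂ 2 (volume.restrict Ω) →L[ℂ] Lp ℂ 2 (volume.restrict Ω))
    have h2 : ∀ ξ, (inner ℂ (vSys e T ξ) g : ℂ) * (inner ℂ (vSys e T ξ) f : ℂ) = c ξ := by
      intro ξ; rw [mul_comm]; exact hrw ξ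
    simpa [h2, uSys] using this
end
end

section
/- Associativity of the L-convolution: let (u_ξ)_{ξ∈I} be a Riesz basis of L²(Ω) with biorthogonal family (v_ξ)_{ξ∈I}. Then for all f, g, h ∈ L²(Ω) one has (f ⋆_L g) ⋆_L h = f ⋆_L (g ⋆_L h) in L²(Ω), and the L-Fourier coefficients of either side at ξ equal f̂(ξ)·ĝ(ξ)·ĥ(ξ). -/
open Complex MeasureTheory Set

noncomputable section

lemma vSys_inner {H : Type*} [NormedAddCommGroup H] [InnerProductSpace ℂ H] [CompleteSpace H]
    {ι : Type*} (e : HilbertBasis ι ℂ H) (T : H ≃L[ℂ] H) (ξ : ι) (x : H) :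
    (inner ℂ (vSys e T ξ) x : ℂ) = inner ℂ (e ξ) ((T.symm : H →L[ℂ] H) x) := by
  rw [vSys, ContinuousLinearMap.adjoint_inner_left]

/-- Biorthogonality: the `v`-coefficient of a convergent series `∑ c ξ • u ξ` is `c η`. -/
lemma coeff_of_hasSum {H : Type*} [NormedAddCommGroup H] [InnerProductSpace ℂ H]
    [CompleteSpace H] {ι : Type*} (e : HilbertBasis ι ℂ H) (T : H ≃L[ℂ] H)
    {c : ι → ℂ} {y : H} (hy : HasSum (fun ξ => c ξ • uSys e T ξ) y) (η : ι) :
    (inner ℂ (vSys e T η) y : ℂ) = c η := by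
  classical
  have h1 : HasSum (fun ξ => c ξ • e ξ) ((T.symm : H →L[ℂ] H) y) := by
    have := hy.mapL (T.symm : H →L[ℂ] H)
    simp only [uSys, ContinuousLinearMap.map_smul] at this
    convert this using 2
    simp [uSys]
  have h2 := h1.mapL (innerSL ℂ (e η))
  have h3 : (fun ξ => (innerSL ℂ (e η)) (c ξ • e ξ)) = fun ξ => if ξ = η then c η else 0 := by
    funext ξ
    have horth := orthonormal_iff_ite.mp e.orthonormal η ξ
    simp only [innerSL_apply_apply, inner_smul_right, horth]
    rcases eq_or_ne ξ η with rfl | hne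
    · simp
    · simp [hne, Ne.symm hne]
  rw [h3] at h2
  have h4 := (hasSum_ite_eq η (c η)).unique h2
  rw [innerSL_apply_apply] at h4
  rw [vSys_inner]
  exact h4.symm
theorem stmt_11 {n : ℕ} (Ω : Set (Fin n → ℝ)) (hΩo : IsOpen Ω)
    (hΩb : Bornology.IsBounded Ω)
    {ι : Type*} [Countable ι]
    (e : HilbertBasis ι ℂ (Lp ℂ 2 (volume.restrict Ω)))
    (T : Lp ℂ 2 (volume.restrict Ω) ≃L[ℂ] Lp ℂ 2 (volume.restrict Ω))
    (f g h fg gh : Lp ℂ 2 (volume.restrict Ω))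
    (hfg : HasSum (fun ξ =>
      ((inner ℂ (vSys e T ξ) f : ℂ) * (inner ℂ (vSys e T ξ) g : ℂ)) • uSys e T ξ) fg)
    (hgh : HasSum (fun ξ =>
      ((inner ℂ (vSys e T ξ) g : ℂ) * (inner ℂ (vSys e T ξ) h : ℂ)) • uSys e T ξ) gh) :
    ∃ S : Lp ℂ 2 (volume.restrict Ω),
      HasSum (fun ξ =>
        ((inner ℂ (vSys e T ξ) fg : ℂ) * (inner ℂ (vSys e T ξ) h : ℂ)) • uSys e T ξ) S ∧
      HasSum (fun ξ =>
        ((inner ℂ (vSys e T ξ) f : ℂ) * (inner ℂ (vSys e T ξ) gh : ℂ)) • uSys e T ξ) S ∧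
      ∀ η, (inner ℂ (vSys e T η) S : ℂ) =
        (inner ℂ (vSys e T η) f : ℂ) * (inner ℂ (vSys e T η) g : ℂ) *
          (inner ℂ (vSys e T η) h : ℂ) := by
  classical
  set a : ι → ℂ := fun ξ => (inner ℂ (vSys e T ξ) f : ℂ) with ha
  set b : ι → ℂ := fun ξ => (inner ℂ (vSys e T ξ) g : ℂ) with hb
  set hh : ι → ℂ := fun ξ => (inner ℂ (vSys e T ξ) h : ℂ) with hhh
  set c : ι → ℂ := fun ξ => a ξ * b ξ * hh ξ with hc
  set Ts : Lp ℂ 2 (volume.restrict Ω) →L[ℂ] Lp ℂ 2 (volume.restrict Ω) :=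
    (T.symm : Lp ℂ 2 (volume.restrict Ω) →L[ℂ] Lp ℂ 2 (volume.restrict Ω)) with hTs
  have hfgc : ∀ η, (inner ℂ (vSys e T η) fg : ℂ) = a η * b η :=
    fun η => coeff_of_hasSum e T hfg η
  have hghc : ∀ η, (inner ℂ (vSys e T η) gh : ℂ) = b η * hh η :=
    fun η => coeff_of_hasSum e T hgh η
  -- a * b are the ℓ² coefficients of T⁻¹ fg
  have hab : ∀ ξ, (e.repr (Ts fg)) ξ = a ξ * b ξ := by
    intro ξ
    rw [e.repr_apply_apply, hTs, ← vSys_inner e T ξ fg]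
    exact hfgc ξ
  -- hh is bounded
  have hhbd : ∀ ξ, ‖hh ξ‖ ≤ ‖Ts h‖ := by
    intro ξ
    have h0 : hh ξ = inner ℂ (e ξ) (Ts h) := vSys_inner e T ξ h
    rw [h0]
    calc ‖(inner ℂ (e ξ) (Ts h) : ℂ)‖ ≤ ‖e ξ‖ * ‖Ts h‖ := norm_inner_le_norm _ _
      _ = ‖Ts h‖ := by rw [e.orthonormal.1 ξ, one_mul]
  -- c is ℓ²
  have htwo : (2 : ENNReal).toReal = (2 : ℝ) := by simp
  have hcmem : Memℓp c 2 := by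
    apply memℓp_gen
    rw [htwo]
    have habsum : Summable (fun ξ => ‖a ξ * b ξ‖ ^ (2 : ℝ)) := by
      have hmem := lp.memℓp (e.repr (Ts fg))
      rw [memℓp_gen_iff (by rw [htwo]; norm_num)] at hmem
      rw [htwo] at hmem
      refine hmem.congr fun ξ => ?_
      rw [hab ξ]
    refine Summable.of_nonneg_of_le (fun ξ => by positivity)
      (fun ξ => ?_) (habsum.mul_left (‖Ts h‖ ^ (2 : ℝ)))
    have hle : ‖c ξ‖ ≤ ‖Ts h‖ * ‖a ξ * b ξ‖ := by
      have h6 : ‖c ξ‖ = ‖hh ξ‖ * ‖a ξ * b ξ‖ := by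
        simp only [hc, norm_mul]; ring
      rw [h6]
      gcongr
      exact hhbd ξ
    calc ‖c ξ‖ ^ (2:ℝ) ≤ (‖Ts h‖ * ‖a ξ * b ξ‖) ^ (2:ℝ) :=
          Real.rpow_le_rpow (norm_nonneg _) hle (by norm_num)
      _ = ‖Ts h‖ ^ (2:ℝ) * ‖a ξ * b ξ‖ ^ (2:ℝ) :=
          Real.mul_rpow (norm_nonneg _) (norm_nonneg _)
  -- build S
  set m : lp (fun _ : ι => ℂ) 2 := ⟨c, hcmem⟩ with hm
  have hsum_e : HasSum (fun ξ => c ξ • (e ξ)) (e.repr.symm m) := e.hasSum_repr_symm m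
  set S : Lp ℂ 2 (volume.restrict Ω) := T (e.repr.symm m) with hS
  have hsum_u : HasSum (fun ξ => c ξ • uSys e T ξ) S := by
    have h5 := hsum_e.mapL (T : Lp ℂ 2 (volume.restrict Ω) →L[ℂ] Lp ℂ 2 (volume.restrict Ω))
    simpa only [uSys, ContinuousLinearMap.map_smul, ContinuousLinearEquiv.coe_coe,
      hS] using h5
  refine ⟨S, ?_, ?_, ?_⟩
  · have heq : (fun ξ => ((inner ℂ (vSys e T ξ) fg : ℂ) * (inner ℂ (vSys e T ξ) h : ℂ))
        • uSys e T ξ) = fun ξ => c ξ • uSys e T ξ := by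
      funext ξ; rw [hfgc ξ]
    rw [heq]; exact hsum_u
  · have heq : (fun ξ => ((inner ℂ (vSys e T ξ) f : ℂ) * (inner ℂ (vSys e T ξ) gh : ℂ))
        • uSys e T ξ) = fun ξ => c ξ • uSys e T ξ := by
      funext ξ; rw [hghc ξ, hc]; simp only [ha]; ring_nf
    rw [heq]; exact hsum_u
  · intro η
    exact coeff_of_hasSum e T hsum_u η
end
end

section
/- L¹-bound for the L-convolution: let (u_ξ)_{ξ∈I} be a Riesz basis of L²(Ω) with biorthogonal family (v_ξ)_{ξ∈I}, and assume ‖u_ξ‖_{L²(Ω)} = 1 for all ξ ∈ I. Then there is a constant C > 0, depending only on the Riesz system (not on f, g, Ω), such that for all f, g ∈ L²(Ω): Σ_{ξ∈I} |f̂(ξ)·ĝ(ξ)|·‖u_ξ‖_{L¹(Ω)} ≤ C·|Ω|^{1/2}·‖f‖_{L²(Ω)}·‖g‖_{L²(Ω)}, where |Ω| denotes the Lebesgue measure of Ω; in particular f ⋆_L g ∈ L¹(Ω) with ‖f ⋆_L g‖_{L¹(Ω)} ≤ C·|Ω|^{1/2}·‖f‖_{L²(Ω)}·‖g‖_{L²(Ω)}.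 -/
open Complex MeasureTheory Set
open scoped ENNReal NNReal

noncomputable section

/-- L¹ norm controlled by L² norm times √measure. -/
lemma aux_integral_norm_le {α : Type*} [MeasurableSpace α] {μ : Measure α}
    [IsFiniteMeasure μ] (f : Lp ℂ 2 μ) :
    ∫ x, ‖f x‖ ∂μ ≤ Real.sqrt (μ Set.univ).toReal * ‖f‖ := by
  have hle := eLpNorm_le_eLpNorm_mul_rpow_measure_univ (μ := μ) (f := ⇑f)
    (one_le_two : (1 : ℝ≥0∞) ≤ 2) (Lp.aestronglyMeasurable f)
  have hexp : (1 / (1 : ℝ≥0∞).toReal - 1 / (2 : ℝ≥0∞).toReal) = (1 / 2 : ℝ) := by norm_num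
  rw [hexp] at hle
  have h1 : ∫ x, ‖f x‖ ∂μ = (eLpNorm (⇑f) 1 μ).toReal := by
    rw [integral_norm_eq_lintegral_enorm (Lp.aestronglyMeasurable f),
      eLpNorm_one_eq_lintegral_enorm]
  have h2ne : eLpNorm (⇑f) 2 μ ≠ ∞ := (Lp.memLp f).eLpNorm_ne_top
  have hμne : (μ Set.univ : ℝ≥0∞) ^ (1 / 2 : ℝ) ≠ ∞ :=
    (ENNReal.rpow_lt_top_of_nonneg (by norm_num) (measure_ne_top μ _)).ne
  have hmono := ENNReal.toReal_mono (ENNReal.mul_ne_top h2ne hμne) hle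
  rw [ENNReal.toReal_mul] at hmono
  rw [h1]
  calc (eLpNorm (⇑f) 1 μ).toReal
      ≤ (eLpNorm (⇑f) 2 μ).toReal * ((μ Set.univ) ^ (1 / 2 : ℝ)).toReal := hmono
    _ = Real.sqrt (μ Set.univ).toReal * ‖f‖ := by
        rw [Lp.norm_def, ← ENNReal.toReal_rpow, Real.sqrt_eq_rpow, mul_comm]

/-- Parseval for a Hilbert basis in `rpow` form. -/
lemma aux_parseval {H : Type*} [NormedAddCommGroup H] [InnerProductSpace ℂ H]
    [CompleteSpace H] {ι : Type*} (e : HilbertBasis ι ℂ H) (x : H) :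
    HasSum (fun i => ‖(inner ℂ (e i) x : ℂ)‖ ^ 2) (‖x‖ ^ 2) := by
  have h := lp.hasSum_norm (E := fun _ : ι => ℂ) (p := 2) (by norm_num) (e.repr x)
  have ht : ((2 : ℝ≥0∞).toReal) = ((2 : ℕ) : ℝ) := by norm_num
  have e1 : (fun i => ‖(e.repr x) i‖ ^ ((2 : ℝ≥0∞).toReal)) =
      fun i => ‖(inner ℂ (e i) x : ℂ)‖ ^ 2 := by
    funext i
    rw [e.repr_apply_apply, ht, Real.rpow_natCast]
  have e2 : ‖e.repr x‖ ^ ((2 : ℝ≥0∞).toReal) = ‖x‖ ^ 2 := by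
    rw [e.repr.norm_map x, ht, Real.rpow_natCast]
  rw [e1, e2] at h
  exact h

/-- Cauchy–Schwarz for tsums of nonnegative reals. -/
lemma aux_tsum_cs {ι : Type*} {a b : ι → ℝ} (ha : ∀ i, 0 ≤ a i) (hb : ∀ i, 0 ≤ b i)
    {A B : ℝ} (hsa : HasSum (fun i => a i ^ 2) A) (hsb : HasSum (fun i => b i ^ 2) B) :
    Summable (fun i => a i * b i) ∧
      ∑' i, a i * b i ≤ Real.sqrt A * Real.sqrt B := by
  have key : ∀ s : Finset ι, ∑ i ∈ s, a i * b i ≤ Real.sqrt A * Real.sqrt B := by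
    intro s
    refine (Real.sum_mul_le_sqrt_mul_sqrt s a b).trans ?_
    have hA : ∑ i ∈ s, a i ^ 2 ≤ A :=
      hsa.tsum_eq ▸ Summable.sum_le_tsum s (fun i _ => sq_nonneg _) hsa.summable
    have hB : ∑ i ∈ s, b i ^ 2 ≤ B :=
      hsb.tsum_eq ▸ Summable.sum_le_tsum s (fun i _ => sq_nonneg _) hsb.summable
    exact mul_le_mul (Real.sqrt_le_sqrt hA) (Real.sqrt_le_sqrt hB)
      (Real.sqrt_nonneg _) (Real.sqrt_nonneg _)
  have hsum : Summable (fun i => a i * b i) :=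
    summable_of_sum_le (fun i => mul_nonneg (ha i) (hb i)) key
  exact ⟨hsum, Summable.tsum_le_of_sum_le hsum key⟩

set_option maxHeartbeats 1000000 in
theorem stmt_12 {n : ℕ} (Ω : Set (Fin n → ℝ)) (hΩo : IsOpen Ω)
    (hΩb : Bornology.IsBounded Ω)
    {ι : Type*} [Countable ι]
    (e : HilbertBasis ι ℂ (Lp ℂ 2 (volume.restrict Ω)))
    (T : Lp ℂ 2 (volume.restrict Ω) ≃L[ℂ] Lp ℂ 2 (volume.restrict Ω))
    (hu1 : ∀ ξ, ‖uSys e T ξ‖ = 1) :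
    ∃ C : ℝ, 0 < C ∧
      ∀ f g : Lp ℂ 2 (volume.restrict Ω),
        Summable (fun ξ =>
          ‖(inner ℂ (vSys e T ξ) f : ℂ) * (inner ℂ (vSys e T ξ) g : ℂ)‖ *
            ∫ x, ‖(uSys e T ξ) x‖ ∂(volume.restrict Ω)) ∧
        (∑' ξ, ‖(inner ℂ (vSys e T ξ) f : ℂ) * (inner ℂ (vSys e T ξ) g : ℂ)‖ *
            ∫ x, ‖(uSys e T ξ) x‖ ∂(volume.restrict Ω)) ≤
          C * Real.sqrt ((volume Ω).toReal) * (‖f‖ * ‖g‖) ∧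
        ∀ S : Lp ℂ 2 (volume.restrict Ω),
          HasSum (fun ξ =>
            ((inner ℂ (vSys e T ξ) f : ℂ) * (inner ℂ (vSys e T ξ) g : ℂ)) • uSys e T ξ) S →
          Integrable (⇑S) (volume.restrict Ω) ∧
          (∫ x, ‖S x‖ ∂(volume.restrict Ω)) ≤
            C * Real.sqrt ((volume Ω).toReal) * (‖f‖ * ‖g‖) := by
  haveI : IsFiniteMeasure (volume.restrict Ω) := by
    constructor
    rw [Measure.restrict_apply_univ]
    exact hΩb.measure_lt_top
  have hμuniv : ((volume.restrict Ω) Set.univ).toReal = (volume Ω).toReal := by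
    rw [Measure.restrict_apply_univ]
  set M : ℝ := ‖(T.symm : Lp ℂ 2 (volume.restrict Ω) →L[ℂ] Lp ℂ 2 (volume.restrict Ω))‖ with hM
  refine ⟨M ^ 2 + 1, by positivity, ?_⟩
  intro f g
  set V := Real.sqrt ((volume Ω).toReal) with hV
  have hV0 : 0 ≤ V := Real.sqrt_nonneg _
  -- inner products with vSys
  have hv : ∀ (x : Lp ℂ 2 (volume.restrict Ω)) ξ,
      (inner ℂ (vSys e T ξ) x : ℂ) = inner ℂ (e ξ) (T.symm x) := fun x ξ =>
    ContinuousLinearMap.adjoint_inner_left _ (x := x) (y := e ξ)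
  -- Parseval for f and g
  have hPf := aux_parseval e (T.symm f)
  have hPg := aux_parseval e (T.symm g)
  have hPf' : HasSum (fun ξ => ‖(inner ℂ (vSys e T ξ) f : ℂ)‖ ^ 2) (‖T.symm f‖ ^ 2) := by
    simpa only [hv] using hPf
  have hPg' : HasSum (fun ξ => ‖(inner ℂ (vSys e T ξ) g : ℂ)‖ ^ 2) (‖T.symm g‖ ^ 2) := by
    simpa only [hv] using hPg
  obtain ⟨hsab, hab⟩ := aux_tsum_cs (fun ξ => norm_nonneg _) (fun ξ => norm_nonneg _)
    hPf' hPg'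
  rw [Real.sqrt_sq (norm_nonneg _), Real.sqrt_sq (norm_nonneg _)] at hab
  -- bound the product of transformed norms
  have hTf : ‖T.symm f‖ ≤ M * ‖f‖ := (T.symm : Lp ℂ 2 (volume.restrict Ω) →L[ℂ] Lp ℂ 2 (volume.restrict Ω)).le_opNorm f
  have hTg : ‖T.symm g‖ ≤ M * ‖g‖ := (T.symm : Lp ℂ 2 (volume.restrict Ω) →L[ℂ] Lp ℂ 2 (volume.restrict Ω)).le_opNorm g
  have hM0 : 0 ≤ M := norm_nonneg _
  have habM : ∑' ξ, ‖(inner ℂ (vSys e T ξ) f : ℂ)‖ * ‖(inner ℂ (vSys e T ξ) g : ℂ)‖ ≤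
      M ^ 2 * (‖f‖ * ‖g‖) := by
    refine hab.trans ?_
    calc ‖T.symm f‖ * ‖T.symm g‖ ≤ (M * ‖f‖) * (M * ‖g‖) :=
          mul_le_mul hTf hTg (norm_nonneg _) (by positivity)
      _ = M ^ 2 * (‖f‖ * ‖g‖) := by ring
  -- L¹ bound of uSys
  have hu : ∀ ξ, ∫ x, ‖(uSys e T ξ) x‖ ∂(volume.restrict Ω) ≤ V := by
    intro ξ
    have := aux_integral_norm_le (uSys e T ξ)
    rwa [hμuniv, hu1 ξ, mul_one] at this
  have hu0 : ∀ ξ, 0 ≤ ∫ x, ‖(uSys e T ξ) x‖ ∂(volume.restrict Ω) := fun ξ =>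
    integral_nonneg fun x => norm_nonneg _
  -- summability and bound of the main series
  have hterm_le : ∀ ξ,
      ‖(inner ℂ (vSys e T ξ) f : ℂ) * (inner ℂ (vSys e T ξ) g : ℂ)‖ *
        ∫ x, ‖(uSys e T ξ) x‖ ∂(volume.restrict Ω) ≤
      (‖(inner ℂ (vSys e T ξ) f : ℂ)‖ * ‖(inner ℂ (vSys e T ξ) g : ℂ)‖) * V := by
    intro ξ
    rw [norm_mul]
    exact mul_le_mul_of_nonneg_left (hu ξ) (by positivity)
  have hterm0 : ∀ ξ, 0 ≤
      ‖(inner ℂ (vSys e T ξ) f : ℂ) * (inner ℂ (vSys e T ξ) g : ℂ)‖ *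
        ∫ x, ‖(uSys e T ξ) x‖ ∂(volume.restrict Ω) := fun ξ => mul_nonneg (norm_nonneg _) (hu0 ξ)
  have hsum : Summable (fun ξ =>
      ‖(inner ℂ (vSys e T ξ) f : ℂ) * (inner ℂ (vSys e T ξ) g : ℂ)‖ *
        ∫ x, ‖(uSys e T ξ) x‖ ∂(volume.restrict Ω)) :=
    Summable.of_nonneg_of_le hterm0 hterm_le (hsab.mul_right V)
  have hfinal : M ^ 2 * (‖f‖ * ‖g‖) * V ≤ (M ^ 2 + 1) * V * (‖f‖ * ‖g‖) := by
    have h1 : 0 ≤ ‖f‖ * ‖g‖ := by positivity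
    nlinarith [mul_nonneg (mul_nonneg hV0 h1) (sq_nonneg M)]
  refine ⟨hsum, ?_, ?_⟩
  · calc ∑' ξ, ‖(inner ℂ (vSys e T ξ) f : ℂ) * (inner ℂ (vSys e T ξ) g : ℂ)‖ *
          ∫ x, ‖(uSys e T ξ) x‖ ∂(volume.restrict Ω)
        ≤ ∑' ξ, (‖(inner ℂ (vSys e T ξ) f : ℂ)‖ * ‖(inner ℂ (vSys e T ξ) g : ℂ)‖) * V :=
          Summable.tsum_le_tsum hterm_le hsum (hsab.mul_right V)
      _ = (∑' ξ, ‖(inner ℂ (vSys e T ξ) f : ℂ)‖ * ‖(inner ℂ (vSys e T ξ) g : ℂ)‖) * V :=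
          tsum_mul_right
      _ ≤ M ^ 2 * (‖f‖ * ‖g‖) * V := mul_le_mul_of_nonneg_right habM hV0
      _ ≤ (M ^ 2 + 1) * V * (‖f‖ * ‖g‖) := hfinal
  · intro S hS
    have hInt : Integrable (⇑S) (volume.restrict Ω) :=
      memLp_one_iff_integrable.mp ((Lp.memLp S).mono_exponent one_le_two)
    refine ⟨hInt, ?_⟩
    -- norm of S
    have hnormterm : (fun ξ =>
        ‖((inner ℂ (vSys e T ξ) f : ℂ) * (inner ℂ (vSys e T ξ) g : ℂ)) • uSys e T ξ‖) =
        fun ξ => ‖(inner ℂ (vSys e T ξ) f : ℂ)‖ * ‖(inner ℂ (vSys e T ξ) g : ℂ)‖ := by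
      funext ξ
      rw [norm_smul, hu1 ξ, mul_one, norm_mul]
    have hsum' : Summable (fun ξ =>
        ‖((inner ℂ (vSys e T ξ) f : ℂ) * (inner ℂ (vSys e T ξ) g : ℂ)) • uSys e T ξ‖) := by
      rw [hnormterm]; exact hsab
    have hSnorm : ‖S‖ ≤ M ^ 2 * (‖f‖ * ‖g‖) := by
      rw [← hS.tsum_eq]
      refine (norm_tsum_le_tsum_norm hsum').trans ?_
      rw [hnormterm]
      exact habM
    have hIS := aux_integral_norm_le S
    rw [hμuniv] at hIS
    calc ∫ x, ‖S x‖ ∂(volume.restrict Ω) ≤ V * ‖S‖ := hIS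
      _ ≤ V * (M ^ 2 * (‖f‖ * ‖g‖)) := mul_le_mul_of_nonneg_left hSnorm hV0
      _ ≤ (M ^ 2 + 1) * V * (‖f‖ * ‖g‖) := by
          rw [mul_comm V (M ^ 2 * (‖f‖ * ‖g‖))]; exact hfinal
end
end

section
/- L²-boundedness of L-pseudo-differential operators: let Ω ⊂ ℝⁿ be a bounded open set and k an integer with k > n/2. Let (u_ξ)_{ξ∈I} be a Riesz basis of L²(Ω) with biorthogonal family (v_ξ)_{ξ∈I}. Assume Ω satisfies the Sobolev embedding inequality: there is C_S > 0 such that every k-times continuously differentiable function g : Ω → ℂ with bounded partial derivatives up to order k satisfies sup_{y∈Ω} |g(y)|² ≤ C_S·Σ_{|α|≤k} ∫_Ω |∂^α g(y)|² dy. Let a : Ω × I → ℂ be such that for each ξ ∈ I the function x ↦ a(x,ξ) is k-times continuously differentiable on Ω, and suppose there is C > 0 with |∂_x^α a(x,ξ)| ≤ C for all x ∈ Ω, all ξ ∈ I and all multi-indices α with |α| ≤ k. Then there exists C′ > 0 such that for every f ∈ L²(Ω) whose L-Fourier coefficients ⟨f, v_ξ⟩ vanish for all but finitely many ξ, the function (Op_L(a)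 f)(x) := Σ_{ξ∈I} u_ξ(x)·a(x,ξ)·⟨f, v_ξ⟩ belongs to L²(Ω) and ‖Op_L(a) f‖_{L²(Ω)} ≤ C′·‖f‖_{L²(Ω)}. -/
open Complex MeasureTheory Set ENNReal

noncomputable section

section Aux

/-- Norm of a continuous multilinear map on `(Fin n → ℝ)^i` is bounded by the sum of
norms of its values on basis tuples. -/
lemma multilinear_norm_le_sum_basis {n i : ℕ}
    (A : ContinuousMultilinearMap ℝ (fun _ : Fin i => (Fin n → ℝ)) ℂ) :
    ‖A‖ ≤ ∑ j : Fin i → Fin n, ‖A (fun m => (Pi.single (j m) (1:ℝ) : Fin n → ℝ))‖ := by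
  apply ContinuousMultilinearMap.opNorm_le_bound
    (Finset.sum_nonneg fun _ _ => norm_nonneg _)
  intro m
  have hm : m = fun l => ∑ t : Fin n, (m l t) • (Pi.single t (1:ℝ) : Fin n → ℝ) := by
    funext l t
    simp [Pi.single_apply, Finset.sum_ite_eq', mul_comm]
  have expand : A m = ∑ j : Fin i → Fin n,
      (∏ l, m l (j l)) • A (fun l => (Pi.single (j l) (1:ℝ) : Fin n → ℝ)) := by
    conv_lhs => rw [hm]
    rw [show (A fun l => ∑ t : Fin n, (m l t) • (Pi.single t (1:ℝ) : Fin n → ℝ))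
        = ∑ j : Fin i → Fin n, A fun l => (m l (j l)) • (Pi.single (j l) (1:ℝ) : Fin n → ℝ) from
      A.toMultilinearMap.map_sum (fun l t => (m l t) • (Pi.single t (1:ℝ) : Fin n → ℝ))]
    refine Finset.sum_congr rfl fun j _ => ?_
    exact A.toMultilinearMap.map_smul_univ (fun l => m l (j l))
      (fun l => (Pi.single (j l) (1:ℝ) : Fin n → ℝ))
  rw [expand]
  calc ‖∑ j : Fin i → Fin n, (∏ l, m l (j l)) • A (fun l => (Pi.single (j l) (1:ℝ) : Fin n → ℝ))‖
      ≤ ∑ j : Fin i → Fin n,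
        ‖(∏ l, m l (j l)) • A (fun l => (Pi.single (j l) (1:ℝ) : Fin n → ℝ))‖ :=
        norm_sum_le _ _
    _ ≤ ∑ j : Fin i → Fin n,
        ‖A (fun l => (Pi.single (j l) (1:ℝ) : Fin n → ℝ))‖ * ∏ l, ‖m l‖ := by
        refine Finset.sum_le_sum fun j _ => ?_
        rw [norm_smul, mul_comm]
        refine mul_le_mul_of_nonneg_left ?_ (norm_nonneg _)
        rw [Real.norm_eq_abs, Finset.abs_prod]
        refine Finset.prod_le_prod (fun l _ => abs_nonneg _) fun l _ => ?_
        exact (Real.norm_eq_abs _) ▸ norm_le_pi_norm (m l) (j l)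
    _ = (∑ j : Fin i → Fin n, ‖A (fun l => (Pi.single (j l) (1:ℝ) : Fin n → ℝ))‖) * ∏ l, ‖m l‖ :=
        by rw [Finset.sum_mul]

variable {H : Type*} [NormedAddCommGroup H] [InnerProductSpace ℂ H] [CompleteSpace H]
    {ι : Type*} (e : HilbertBasis ι ℂ H) (T : H ≃L[ℂ] H)

lemma orthonormal_coe : Orthonormal ℂ (fun i : ι => e i) := e.orthonormal

lemma norm_sum_smul_uSys_le (b : ι → ℂ) (s : Finset ι) :
    ‖∑ ξ ∈ s, b ξ • uSys e T ξ‖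
      ≤ ‖(T : H →L[ℂ] H)‖ * Real.sqrt (∑ ξ ∈ s, ‖b ξ‖ ^ 2) := by
  have h1 : ∑ ξ ∈ s, b ξ • uSys e T ξ = T (∑ ξ ∈ s, b ξ • e ξ) := by
    simp [uSys, map_sum]
  rw [h1]
  refine le_trans ((T : H →L[ℂ] H).le_opNorm _)
    (mul_le_mul_of_nonneg_left ?_ (norm_nonneg _))
  have h3 : ‖∑ ξ ∈ s, b ξ • e ξ‖ ^ 2 = ∑ ξ ∈ s, ‖b ξ‖ ^ 2 := by
    have h := (orthonormal_coe e).inner_sum b b s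
    rw [inner_self_eq_norm_sq_to_K] at h
    simp only [RCLike.conj_mul] at h
    exact_mod_cast h
  rw [← h3, Real.sqrt_sq (norm_nonneg _)]

lemma sum_sq_inner_vSys_le (f : H) (s : Finset ι) :
    ∑ ξ ∈ s, ‖(inner ℂ (vSys e T ξ) f : ℂ)‖ ^ 2
      ≤ (‖(T.symm : H →L[ℂ] H)‖ * ‖f‖) ^ 2 := by
  have h1 : ∀ ξ, (inner ℂ (vSys e T ξ) f : ℂ) = inner ℂ (e ξ) ((T.symm : H →L[ℂ] H) f) :=
    fun ξ => ContinuousLinearMap.adjoint_inner_left _ _ _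
  calc ∑ ξ ∈ s, ‖(inner ℂ (vSys e T ξ) f : ℂ)‖ ^ 2
      = ∑ ξ ∈ s, ‖(inner ℂ (e ξ) ((T.symm : H →L[ℂ] H) f) : ℂ)‖ ^ 2 := by
        refine Finset.sum_congr rfl fun ξ _ => by rw [h1]
    _ ≤ ‖(T.symm : H →L[ℂ] H) f‖ ^ 2 :=
        Orthonormal.sum_inner_products_le _ (orthonormal_coe e)
    _ ≤ (‖(T.symm : H →L[ℂ] H)‖ * ‖f‖) ^ 2 := by
        have := (T.symm : H →L[ℂ] H).le_opNorm f
        exact pow_le_pow_left₀ (norm_nonneg _) this 2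

variable {α : Type*} [MeasurableSpace α] {μ : Measure α}

lemma lintegral_nnnorm_sq_Lp (h : Lp ℂ 2 μ) :
    ∫⁻ y, (‖h y‖₊ : ℝ≥0∞) ^ 2 ∂μ = ENNReal.ofReal (‖h‖ ^ 2) := by
  have h1 : eLpNorm h 2 μ = (∫⁻ y, (‖h y‖₊ : ℝ≥0∞) ^ (2:ℝ) ∂μ) ^ (1/(2:ℝ)) := by
    rw [eLpNorm_eq_lintegral_rpow_enorm_toReal (by norm_num) (by norm_num)]
    simp only [enorm_eq_nnnorm]
    norm_num
  have h3 : eLpNorm h 2 μ = ENNReal.ofReal ‖h‖ := by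
    rw [Lp.norm_def, ENNReal.ofReal_toReal (Lp.eLpNorm_ne_top h)]
  have h4 : (∫⁻ y, (‖h y‖₊ : ℝ≥0∞) ^ (2:ℕ) ∂μ)
      = ((∫⁻ y, (‖h y‖₊ : ℝ≥0∞) ^ (2:ℝ) ∂μ) ^ (1/(2:ℝ))) ^ (2:ℕ) := by
    rw [← ENNReal.rpow_natCast _ 2, ← ENNReal.rpow_mul]
    norm_num
  rw [h4, ← h1, h3, ← ENNReal.ofReal_pow (norm_nonneg _)]

lemma lintegral_nnnorm_sq_Lp_le (h : Lp ℂ 2 μ) {b : ℝ} (hb : ‖h‖ ≤ b) :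
    ∫⁻ y, (‖h y‖₊ : ℝ≥0∞) ^ 2 ∂μ ≤ ENNReal.ofReal (b ^ 2) := by
  rw [lintegral_nnnorm_sq_Lp]
  exact ENNReal.ofReal_le_ofReal (by nlinarith [norm_nonneg h])

lemma coeFn_sum_smul {ι : Type*} (s : Finset ι) (b : ι → ℂ) (g : ι → Lp ℂ 2 μ) :
    (↑(∑ ξ ∈ s, b ξ • g ξ) : α → ℂ) =ᵐ[μ] fun y => ∑ ξ ∈ s, b ξ * g ξ y := by
  classical
  induction s using Finset.induction_on with
  | empty => simp only [Finset.sum_empty]; exact Lp.coeFn_zero ℂ 2 μ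
  | insert x s hx ih =>
    rw [Finset.sum_insert hx]
    filter_upwards [Lp.coeFn_add (b x • g x) (∑ ξ ∈ s, b ξ • g ξ), ih,
      Lp.coeFn_smul (b x) (g x)] with y h1 h2 h3
    rw [h1]
    simp only [Pi.add_apply, h2, h3, Finset.sum_insert hx, Pi.smul_apply, smul_eq_mul]

lemma eLpNorm_le_of_lintegral_sq {g : α → ℂ} {b : ℝ} (hb : 0 ≤ b)
    (h : ∫⁻ y, (‖g y‖₊ : ℝ≥0∞) ^ 2 ∂μ ≤ ENNReal.ofReal (b ^ 2)) :
    eLpNorm g 2 μ ≤ ENNReal.ofReal b := by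
  rw [eLpNorm_eq_lintegral_rpow_enorm_toReal (by norm_num) (by norm_num)]
  simp only [enorm_eq_nnnorm]
  have h2 : (∫⁻ y, (‖g y‖₊ : ℝ≥0∞) ^ ((2:ℝ≥0∞).toReal) ∂μ)
      = ∫⁻ y, (‖g y‖₊ : ℝ≥0∞) ^ (2:ℕ) ∂μ := by
    refine lintegral_congr fun y => ?_
    rw [← ENNReal.rpow_natCast]
    norm_num
  rw [h2]
  calc (∫⁻ y, (‖g y‖₊ : ℝ≥0∞) ^ (2:ℕ) ∂μ) ^ (1 / (2:ℝ≥0∞).toReal)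
      ≤ (ENNReal.ofReal (b ^ 2)) ^ (1 / (2:ℝ≥0∞).toReal) := by
        exact ENNReal.rpow_le_rpow h (by norm_num)
    _ = ENNReal.ofReal b := by
        rw [ENNReal.ofReal_pow hb, ← ENNReal.rpow_natCast (ENNReal.ofReal b) 2,
          ← ENNReal.rpow_mul]
        norm_num

lemma aemeasurable_lintegral_prod_right'' {α β : Type*} [MeasurableSpace α] [MeasurableSpace β]
    {μ : Measure α} {ν : Measure β} [SFinite ν] {f : α × β → ℝ≥0∞}
    (hf : AEMeasurable f (μ.prod ν)) :
    AEMeasurable (fun x => ∫⁻ y, f (x, y) ∂ν) μ := by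
  obtain ⟨g, hg, hfg⟩ := hf
  refine ⟨fun x => ∫⁻ y, g (x, y) ∂ν, hg.lintegral_prod_right', ?_⟩
  filter_upwards [MeasureTheory.Measure.ae_ae_of_ae_prod hfg] with x hx using lintegral_congr_ae hx

end Aux

set_option maxHeartbeats 1000000 in
set_option synthInstance.maxHeartbeats 400000 in
theorem stmt_18 {n : ℕ} (Ω : Set (Fin n → ℝ)) (hΩo : IsOpen Ω)
    (hΩb : Bornology.IsBounded Ω)
    (k : ℕ) (hk : (n : ℝ) / 2 < (k : ℝ))
    {ι : Type*} [Countable ι]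
    (e : HilbertBasis ι ℂ (Lp ℂ 2 (volume.restrict Ω)))
    (T : Lp ℂ 2 (volume.restrict Ω) ≃L[ℂ] Lp ℂ 2 (volume.restrict Ω))
    (CS : ℝ) (hCS : 0 < CS)
    (hSob : ∀ g : (Fin n → ℝ) → ℂ, ContDiffOn ℝ k g Ω →
      (∃ M : ℝ, ∀ i ≤ k, ∀ y ∈ Ω, ‖iteratedFDerivWithin ℝ i g Ω y‖ ≤ M) →
      ∀ y ∈ Ω, ‖g y‖ ^ 2 ≤
        CS * ∑ i ∈ Finset.range (k + 1),
          ∫ z in Ω, ‖iteratedFDerivWithin ℝ i g Ω z‖ ^ 2)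
    (a : (Fin n → ℝ) → ι → ℂ)
    (ha : ∀ ξ, ContDiffOn ℝ k (fun x => a x ξ) Ω)
    (C : ℝ) (hC : 0 < C)
    (hab : ∀ ξ, ∀ i ≤ k, ∀ x ∈ Ω,
      ‖iteratedFDerivWithin ℝ i (fun y => a y ξ) Ω x‖ ≤ C) :
    ∃ C' : ℝ, 0 < C' ∧
      ∀ f : Lp ℂ 2 (volume.restrict Ω),
        {ξ : ι | (inner ℂ (vSys e T ξ) f : ℂ) ≠ 0}.Finite →
        MemLp
          (fun x => ∑' ξ, (uSys e T ξ) x * a x ξ * (inner ℂ (vSys e T ξ) f : ℂ))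
          2 (volume.restrict Ω) ∧
        (eLpNorm
          (fun x => ∑' ξ, (uSys e T ξ) x * a x ξ * (inner ℂ (vSys e T ξ) f : ℂ))
          2 (volume.restrict Ω)).toReal ≤ C' * ‖f‖ := by
  classical
  have hUD : UniqueDiffOn ℝ Ω := hΩo.uniqueDiffOn
  have hΩm : MeasurableSet Ω := hΩo.measurableSet
  have hΩfin : volume Ω ≠ ⊤ := by
    obtain ⟨r, hr⟩ := hΩb.subset_closedBall 0
    exact (lt_of_le_of_lt (measure_mono hr)
      (isCompact_closedBall 0 r).measure_lt_top).ne
  set Tc : Lp ℂ 2 (volume.restrict Ω) →L[ℂ] Lp ℂ 2 (volume.restrict Ω) :=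
    (T : Lp ℂ 2 (volume.restrict Ω) →L[ℂ] Lp ℂ 2 (volume.restrict Ω)) with hTc
  set Tsc : Lp ℂ 2 (volume.restrict Ω) →L[ℂ] Lp ℂ 2 (volume.restrict Ω) :=
    (T.symm : Lp ℂ 2 (volume.restrict Ω) →L[ℂ] Lp ℂ 2 (volume.restrict Ω)) with hTsc
  set B : ℝ := ‖Tc‖ * C * ‖Tsc‖ with hB
  have hB0 : 0 ≤ B := by positivity
  set P : ℕ → ℝ := fun i => ((n:ℝ)^i)^2 with hP
  have hP0 : ∀ i, 0 ≤ P i := fun i => sq_nonneg _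
  set vΩ : ℝ := (volume Ω).toReal with hvΩ
  have hvΩ0 : 0 ≤ vΩ := ENNReal.toReal_nonneg
  set Q : ℝ := ∑ i ∈ Finset.range (k+1), P i with hQ
  have hQ0 : 0 ≤ Q := Finset.sum_nonneg fun i _ => hP0 i
  set D : ℝ := CS * vΩ * Q * B^2 with hD
  have hD0 : 0 ≤ D := by positivity
  refine ⟨Real.sqrt D + 1, by positivity, ?_⟩
  intro f hfin
  set S : Finset ι := hfin.toFinset with hS
  set c : ι → ℂ := fun ξ => (inner ℂ (vSys e T ξ) f : ℂ) with hc
  have hc0 : ∀ ξ ∉ S, c ξ = 0 := by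
    intro ξ h
    rw [hS] at h
    rw [hc]
    simp only
    by_contra hne
    exact h (hfin.mem_toFinset.mpr hne)
  have hFeq : (fun x => ∑' ξ, (uSys e T ξ) x * a x ξ * (inner ℂ (vSys e T ξ) f : ℂ))
      = fun x => ∑ ξ ∈ S, (uSys e T ξ) x * a x ξ * c ξ := by
    funext x
    refine tsum_eq_sum fun ξ hξ => ?_
    have hcc : (inner ℂ (vSys e T ξ) f : ℂ) = c ξ := by rw [hc]
    rw [hcc, hc0 ξ hξ, mul_zero]
  rw [hFeq]
  set Fs : (Fin n → ℝ) → ℂ := fun x => ∑ ξ ∈ S, (uSys e T ξ) x * a x ξ * c ξ with hFs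
  -- basic measurability
  have hamC : ∀ ξ, ContinuousOn (fun x => a x ξ) Ω := fun ξ => (ha ξ).continuousOn
  have hFm : AEStronglyMeasurable Fs (volume.restrict Ω) := by
    refine Finset.aestronglyMeasurable_fun_sum _ fun ξ _ => ?_
    exact ((Lp.aestronglyMeasurable (uSys e T ξ)).mul
      ((hamC ξ).aestronglyMeasurable hΩm)).mul aestronglyMeasurable_const
  -- iterated derivatives of symbols
  set A : ι → (i : ℕ) → (Fin n → ℝ) →
      ContinuousMultilinearMap ℝ (fun _ : Fin i => (Fin n → ℝ)) ℂ :=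
    fun ξ i x => iteratedFDerivWithin ℝ i (fun y => a y ξ) Ω x with hA
  have hAc : ∀ ξ, ∀ i ≤ k, ContinuousOn (A ξ i) Ω := fun ξ i hik =>
    (ha ξ).continuousOn_iteratedFDerivWithin (by exact_mod_cast hik) hUD
  have hAb : ∀ ξ, ∀ i ≤ k, ∀ x ∈ Ω, ‖A ξ i x‖ ≤ C := fun ξ i hik x hx => hab ξ i hik x hx
  -- derivative identity for the frozen-coefficient functions
  have hderiv : ∀ (y : Fin n → ℝ), ∀ i ≤ k, ∀ x ∈ Ω,
      iteratedFDerivWithin ℝ i (fun z => ∑ ξ ∈ S, (c ξ * (uSys e T ξ) y) * a z ξ) Ω x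
        = ∑ ξ ∈ S, (c ξ * (uSys e T ξ) y) • A ξ i x := by
    intro y i hik x hx
    have hcast : (i : WithTop ℕ∞) ≤ (k : WithTop ℕ∞) := by exact_mod_cast hik
    have hterm : ∀ ξ : ι, iteratedFDerivWithin ℝ i
        (fun z => (c ξ * (uSys e T ξ) y) * a z ξ) Ω x
          = (c ξ * (uSys e T ξ) y) • A ξ i x := by
      intro ξ
      have hsmul : (fun z => (c ξ * (uSys e T ξ) y) * a z ξ)
          = (c ξ * (uSys e T ξ) y) • (fun z => a z ξ) := rfl
      rw [hsmul, iteratedFDerivWithin_const_smul_apply (((ha ξ).of_le hcast) x hx) hUD hx]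
    calc iteratedFDerivWithin ℝ i (fun z => ∑ ξ ∈ S, (c ξ * (uSys e T ξ) y) * a z ξ) Ω x
        = ∑ ξ ∈ S, iteratedFDerivWithin ℝ i
            (fun z => (c ξ * (uSys e T ξ) y) * a z ξ) Ω x :=
          by simpa only [Finset.sum_fn] using iteratedFDerivWithin_sum_apply hUD hx (u := S) (i := i)
              (f := fun ξ z => (c ξ * (uSys e T ξ) y) * a z ξ)
              (fun ξ _ => (contDiffOn_const.mul ((ha ξ).of_le hcast)) x hx)
      _ = ∑ ξ ∈ S, (c ξ * (uSys e T ξ) y) • A ξ i x :=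
          Finset.sum_congr rfl fun ξ _ => hterm ξ
  have hgyc : ∀ y : Fin n → ℝ,
      ContDiffOn ℝ k (fun z => ∑ ξ ∈ S, (c ξ * (uSys e T ξ) y) * a z ξ) Ω := by
    intro y
    exact ContDiffOn.sum fun ξ _ => contDiffOn_const.mul (ha ξ)
  -- Sobolev embedding applied
  have hsob' : ∀ y ∈ Ω, ‖Fs y‖^2 ≤ CS * ∑ i ∈ Finset.range (k+1),
      ∫ z in Ω, ‖iteratedFDerivWithin ℝ i
        (fun z => ∑ ξ ∈ S, (c ξ * (uSys e T ξ) y) * a z ξ) Ω z‖^2 := by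
    intro y hy
    have hFsy : Fs y = ∑ ξ ∈ S, (c ξ * (uSys e T ξ) y) * a y ξ :=
      Finset.sum_congr rfl fun ξ _ => by ring
    rw [hFsy]
    refine hSob _ (hgyc y) ⟨∑ ξ ∈ S, ‖c ξ * (uSys e T ξ) y‖ * C, ?_⟩ y hy
    intro i hik x hx
    rw [hderiv y i hik x hx]
    refine (norm_sum_le _ _).trans (Finset.sum_le_sum fun ξ _ => ?_)
    calc ‖(c ξ * (uSys e T ξ) y) • A ξ i x‖
        ≤ ‖c ξ * (uSys e T ξ) y‖ * ‖A ξ i x‖ :=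
          ContinuousMultilinearMap.opNorm_smul_le _ _
      _ ≤ ‖c ξ * (uSys e T ξ) y‖ * C :=
          mul_le_mul_of_nonneg_left (hAb ξ i hik x hx) (norm_nonneg _)
  -- the key kernels
  set Ψ : (i : ℕ) → (Fin n → ℝ) → (Fin n → ℝ) → ℝ≥0∞ :=
    fun i x y => (‖∑ ξ ∈ S, (c ξ * (uSys e T ξ) y) • A ξ i x‖₊ : ℝ≥0∞)^2 with hΨ
  have hWc : ∀ i, i ≤ k → ∀ y : Fin n → ℝ,
      ContinuousOn (fun x => ∑ ξ ∈ S, (c ξ * (uSys e T ξ) y) • A ξ i x) Ω :=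
    fun i hik y => continuousOn_finset_sum _ fun ξ _ => (hAc ξ i hik).fun_const_smul _
  have hint : ∀ i, i ≤ k → ∀ y ∈ Ω,
      (∫ z in Ω, ‖iteratedFDerivWithin ℝ i
        (fun z => ∑ ξ ∈ S, (c ξ * (uSys e T ξ) y) * a z ξ) Ω z‖^2)
      = (∫⁻ x, Ψ i x y ∂(volume.restrict Ω)).toReal := by
    intro i hik y hy
    rw [MeasureTheory.setIntegral_congr_fun hΩm
      (g := fun z => ‖∑ ξ ∈ S, (c ξ * (uSys e T ξ) y) • A ξ i z‖^2)
      (fun z hz => by rw [hderiv y i hik z hz])]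
    rw [integral_eq_lintegral_of_nonneg_ae
      (Filter.Eventually.of_forall fun z => sq_nonneg _)
      (((hWc i hik y).norm.pow 2).aestronglyMeasurable hΩm)]
    congr 1
    refine lintegral_congr fun z => ?_
    simp only [hΨ]
    rw [ENNReal.ofReal_pow (norm_nonneg _), ofReal_norm, enorm_eq_nnnorm]
  -- joint measurability
  have hΨswap : ∀ i, i ≤ k →
      AEMeasurable (fun p : (Fin n → ℝ) × (Fin n → ℝ) => Ψ i p.2 p.1) ((volume.restrict Ω).prod (volume.restrict Ω)) := by
    intro i hik
    have : AEStronglyMeasurable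
        (fun p : (Fin n → ℝ) × (Fin n → ℝ) =>
          ∑ ξ ∈ S, (c ξ * (uSys e T ξ) p.1) • A ξ i p.2) ((volume.restrict Ω).prod (volume.restrict Ω)) := by
      refine Finset.aestronglyMeasurable_fun_sum _ fun ξ _ => AEStronglyMeasurable.fun_smul ?_ ?_
      · exact (Lp.aestronglyMeasurable (uSys e T ξ)).comp_fst.const_mul (c ξ)
      · exact ((hAc ξ i hik).aestronglyMeasurable hΩm).comp_snd
    exact this.enorm.pow_const 2
  have hΨprod : ∀ i, i ≤ k →
      AEMeasurable (fun p : (Fin n → ℝ) × (Fin n → ℝ) => Ψ i p.2 p.1) ((volume.restrict Ω).prod (volume.restrict Ω)) := hΨswap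
  -- pointwise-in-x bound for the inner integral in y
  have hpoint : ∀ i, i ≤ k → ∀ x ∈ Ω,
      ∫⁻ y, Ψ i x y ∂(volume.restrict Ω) ≤ ENNReal.ofReal (P i * (B * ‖f‖)^2) := by
    intro i hik x hx
    set φC : (Fin i → Fin n) → ι → ℂ :=
      fun j ξ => c ξ * (A ξ i x (fun m => (Pi.single (j m) (1:ℝ) : Fin n → ℝ))) with hφC
    set hLp : (Fin i → Fin n) → Lp ℂ 2 (volume.restrict Ω) :=
      fun j => ∑ ξ ∈ S, (φC j ξ) • uSys e T ξ with hhLp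
    have hnorm_hLp : ∀ j, ‖hLp j‖ ≤ B * ‖f‖ := by
      intro j
      refine (norm_sum_smul_uSys_le e T _ S).trans ?_
      have h1 : ∀ ξ ∈ S, ‖φC j ξ‖^2 ≤ C^2 * ‖c ξ‖^2 := by
        intro ξ _
        have h2 : ‖A ξ i x (fun m => (Pi.single (j m) (1:ℝ) : Fin n → ℝ))‖ ≤ C := by
          refine ((A ξ i x).le_opNorm _).trans ?_
          have hone : ∏ m : Fin i, ‖(Pi.single (j m) (1:ℝ) : Fin n → ℝ)‖ = 1 := by
            simp [Pi.norm_single]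
          rw [hone, mul_one]
          exact hAb ξ i hik x hx
        have h3 : ‖φC j ξ‖ = ‖c ξ‖ * ‖A ξ i x (fun m => (Pi.single (j m) (1:ℝ) : Fin n → ℝ))‖ :=
          norm_mul _ _
        rw [h3, mul_pow]
        have h22 : ‖A ξ i x (fun m => (Pi.single (j m) (1:ℝ) : Fin n → ℝ))‖^2 ≤ C^2 :=
          pow_le_pow_left₀ (norm_nonneg _) h2 2
        calc ‖c ξ‖^2 * ‖A ξ i x (fun m => (Pi.single (j m) (1:ℝ) : Fin n → ℝ))‖^2
            ≤ ‖c ξ‖^2 * C^2 := mul_le_mul_of_nonneg_left h22 (sq_nonneg _)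
          _ = C^2 * ‖c ξ‖^2 := mul_comm _ _
      have h4 : ∑ ξ ∈ S, ‖φC j ξ‖^2 ≤ C^2 * (‖Tsc‖ * ‖f‖)^2 := by
        refine (Finset.sum_le_sum h1).trans ?_
        rw [← Finset.mul_sum]
        refine mul_le_mul_of_nonneg_left ?_ (by positivity)
        simpa [hc] using sum_sq_inner_vSys_le e T f S
      calc ‖Tc‖ * Real.sqrt (∑ ξ ∈ S, ‖φC j ξ‖^2)
          ≤ ‖Tc‖ * Real.sqrt (C^2 * (‖Tsc‖ * ‖f‖)^2) :=
            mul_le_mul_of_nonneg_left (Real.sqrt_le_sqrt h4) (norm_nonneg _)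
        _ = B * ‖f‖ := by
            rw [← mul_pow, Real.sqrt_sq (by positivity)]
            rw [hB]; ring
    have hφae : ∀ j : Fin i → Fin n,
        (fun y => ∑ ξ ∈ S, φC j ξ * (uSys e T ξ) y) =ᵐ[(volume.restrict Ω)] ⇑(hLp j) :=
      fun j => (coeFn_sum_smul S (φC j) (fun ξ => uSys e T ξ)).symm
    have hφint : ∀ j : Fin i → Fin n,
        ∫⁻ y, (‖∑ ξ ∈ S, φC j ξ * (uSys e T ξ) y‖₊ : ℝ≥0∞)^2 ∂(volume.restrict Ω)
          ≤ ENNReal.ofReal ((B * ‖f‖)^2) := by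
      intro j
      have heq : ∫⁻ y, (‖∑ ξ ∈ S, φC j ξ * (uSys e T ξ) y‖₊ : ℝ≥0∞)^2 ∂(volume.restrict Ω)
          = ∫⁻ y, (‖(hLp j) y‖₊ : ℝ≥0∞)^2 ∂(volume.restrict Ω) := by
        refine lintegral_congr_ae ?_
        filter_upwards [hφae j] with y hy
        rw [hy]
      rw [heq]
      exact lintegral_nnnorm_sq_Lp_le (hLp j) (hnorm_hLp j)
    have hΨle : ∀ y : Fin n → ℝ,
        Ψ i x y ≤ ENNReal.ofReal ((n:ℝ)^i) *
          ∑ j : Fin i → Fin n, (‖∑ ξ ∈ S, φC j ξ * (uSys e T ξ) y‖₊ : ℝ≥0∞)^2 := by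
      intro y
      have h1 : ‖∑ ξ ∈ S, (c ξ * (uSys e T ξ) y) • A ξ i x‖
          ≤ ∑ j : Fin i → Fin n, ‖∑ ξ ∈ S, φC j ξ * (uSys e T ξ) y‖ := by
        refine (multilinear_norm_le_sum_basis _).trans
          (le_of_eq (Finset.sum_congr rfl fun j _ => ?_))
        congr 1
        rw [ContinuousMultilinearMap.sum_apply]
        refine Finset.sum_congr rfl fun ξ _ => ?_
        rw [ContinuousMultilinearMap.smul_apply, smul_eq_mul]
        simp only [hφC]
        ring
      have h2 : ‖∑ ξ ∈ S, (c ξ * (uSys e T ξ) y) • A ξ i x‖^2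
          ≤ (n:ℝ)^i * ∑ j : Fin i → Fin n, ‖∑ ξ ∈ S, φC j ξ * (uSys e T ξ) y‖^2 := by
        refine (pow_le_pow_left₀ (norm_nonneg _) h1 2).trans ?_
        have h3 := sq_sum_le_card_mul_sum_sq (s := (Finset.univ : Finset (Fin i → Fin n)))
          (f := fun j => ‖∑ ξ ∈ S, φC j ξ * (uSys e T ξ) y‖)
        have hcard : ((Finset.univ : Finset (Fin i → Fin n)).card : ℝ) = (n:ℝ)^i := by
          rw [Finset.card_univ, Fintype.card_fun]
          simp
        rw [hcard] at h3
        exact h3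
      calc Ψ i x y = ENNReal.ofReal (‖∑ ξ ∈ S, (c ξ * (uSys e T ξ) y) • A ξ i x‖^2) := by
            simp only [hΨ]
            rw [ENNReal.ofReal_pow (norm_nonneg _), ofReal_norm, enorm_eq_nnnorm]
        _ ≤ ENNReal.ofReal ((n:ℝ)^i * ∑ j : Fin i → Fin n,
              ‖∑ ξ ∈ S, φC j ξ * (uSys e T ξ) y‖^2) := ENNReal.ofReal_le_ofReal h2
        _ = ENNReal.ofReal ((n:ℝ)^i) * ∑ j : Fin i → Fin n,
              ENNReal.ofReal (‖∑ ξ ∈ S, φC j ξ * (uSys e T ξ) y‖^2) := by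
            rw [ENNReal.ofReal_mul (by positivity),
              ENNReal.ofReal_sum_of_nonneg (fun _ _ => sq_nonneg _)]
        _ = ENNReal.ofReal ((n:ℝ)^i) * ∑ j : Fin i → Fin n,
              (‖∑ ξ ∈ S, φC j ξ * (uSys e T ξ) y‖₊ : ℝ≥0∞)^2 := by
            congr 1
            exact Finset.sum_congr rfl fun j _ => by
              rw [ENNReal.ofReal_pow (norm_nonneg _), ofReal_norm, enorm_eq_nnnorm]
    have hsm : ∀ j : Fin i → Fin n,
        AEMeasurable (fun y => (‖∑ ξ ∈ S, φC j ξ * (uSys e T ξ) y‖₊ : ℝ≥0∞)^2) (volume.restrict Ω) := by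
      intro j
      have : AEStronglyMeasurable (fun y => ∑ ξ ∈ S, φC j ξ * (uSys e T ξ) y) (volume.restrict Ω) :=
        Finset.aestronglyMeasurable_fun_sum _ fun ξ _ =>
          (Lp.aestronglyMeasurable (uSys e T ξ)).const_mul _
      exact this.enorm.pow_const 2
    calc ∫⁻ y, Ψ i x y ∂(volume.restrict Ω)
        ≤ ∫⁻ y, (ENNReal.ofReal ((n:ℝ)^i) * ∑ j : Fin i → Fin n,
            (‖∑ ξ ∈ S, φC j ξ * (uSys e T ξ) y‖₊ : ℝ≥0∞)^2) ∂(volume.restrict Ω) := lintegral_mono hΨle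
      _ = ENNReal.ofReal ((n:ℝ)^i) * ∫⁻ y, (∑ j : Fin i → Fin n,
            (‖∑ ξ ∈ S, φC j ξ * (uSys e T ξ) y‖₊ : ℝ≥0∞)^2) ∂(volume.restrict Ω) :=
          lintegral_const_mul' _ _ ENNReal.ofReal_ne_top
      _ = ENNReal.ofReal ((n:ℝ)^i) * ∑ j : Fin i → Fin n,
            ∫⁻ y, (‖∑ ξ ∈ S, φC j ξ * (uSys e T ξ) y‖₊ : ℝ≥0∞)^2 ∂(volume.restrict Ω) := by
          rw [lintegral_finset_sum' _ (fun j _ => hsm j)]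
      _ ≤ ENNReal.ofReal ((n:ℝ)^i) * ∑ j : Fin i → Fin n, ENNReal.ofReal ((B * ‖f‖)^2) :=
          mul_le_mul_right (Finset.sum_le_sum fun j _ => hφint j) _
      _ = ENNReal.ofReal (P i * (B * ‖f‖)^2) := by
          rw [Finset.sum_const, Finset.card_univ, Fintype.card_fun]
          simp only [Fintype.card_fin]
          rw [nsmul_eq_mul]
          rw [show ((n^i : ℕ) : ℝ≥0∞) = ENNReal.ofReal ((n:ℝ)^i) by
            rw [← ENNReal.ofReal_natCast]; push_cast; ring_nf]
          rw [← ENNReal.ofReal_mul (by positivity), ← ENNReal.ofReal_mul (by positivity)]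
          congr 1
          simp only [hP]; ring
  -- main estimate
  have hmain : ∫⁻ y, (‖Fs y‖₊ : ℝ≥0∞)^2 ∂(volume.restrict Ω)
      ≤ ENNReal.ofReal (((Real.sqrt D + 1) * ‖f‖)^2) := by
    have haeLI : ∀ i, i ≤ k → AEMeasurable (fun y => ∫⁻ x, Ψ i x y ∂(volume.restrict Ω)) (volume.restrict Ω) := by
      intro i hik
      exact aemeasurable_lintegral_prod_right'' (hΨswap i hik)
    have step1 : ∫⁻ y, (‖Fs y‖₊ : ℝ≥0∞)^2 ∂(volume.restrict Ω)
        ≤ ENNReal.ofReal CS * ∑ i ∈ Finset.range (k+1), ∫⁻ y, (∫⁻ x, Ψ i x y ∂(volume.restrict Ω)) ∂(volume.restrict Ω) := by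
      have hae : ∀ᵐ y ∂(volume.restrict Ω), (‖Fs y‖₊ : ℝ≥0∞)^2
          ≤ ENNReal.ofReal CS * ∑ i ∈ Finset.range (k+1), ∫⁻ x, Ψ i x y ∂(volume.restrict Ω) := by
        filter_upwards [ae_restrict_mem hΩm] with y hy
        have h2 : ‖Fs y‖^2 ≤ CS * ∑ i ∈ Finset.range (k+1), (∫⁻ x, Ψ i x y ∂(volume.restrict Ω)).toReal := by
          refine (hsob' y hy).trans (le_of_eq ?_)
          congr 1
          exact Finset.sum_congr rfl fun i hi =>
            hint i (Nat.lt_succ_iff.mp (Finset.mem_range.mp hi)) y hy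
        calc (‖Fs y‖₊ : ℝ≥0∞)^2 = ENNReal.ofReal (‖Fs y‖^2) := by
              rw [ENNReal.ofReal_pow (norm_nonneg _), ofReal_norm, enorm_eq_nnnorm]
          _ ≤ ENNReal.ofReal (CS * ∑ i ∈ Finset.range (k+1), (∫⁻ x, Ψ i x y ∂(volume.restrict Ω)).toReal) :=
              ENNReal.ofReal_le_ofReal h2
          _ = ENNReal.ofReal CS *
              ENNReal.ofReal (∑ i ∈ Finset.range (k+1), (∫⁻ x, Ψ i x y ∂(volume.restrict Ω)).toReal) := by
              rw [ENNReal.ofReal_mul hCS.le]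
          _ = ENNReal.ofReal CS * ∑ i ∈ Finset.range (k+1),
              ENNReal.ofReal ((∫⁻ x, Ψ i x y ∂(volume.restrict Ω)).toReal) := by
              rw [ENNReal.ofReal_sum_of_nonneg (fun _ _ => ENNReal.toReal_nonneg)]
          _ ≤ ENNReal.ofReal CS * ∑ i ∈ Finset.range (k+1), ∫⁻ x, Ψ i x y ∂(volume.restrict Ω) :=
              mul_le_mul_right (Finset.sum_le_sum fun i _ => ENNReal.ofReal_toReal_le) _
      calc ∫⁻ y, (‖Fs y‖₊ : ℝ≥0∞)^2 ∂(volume.restrict Ω)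
          ≤ ∫⁻ y, (ENNReal.ofReal CS * ∑ i ∈ Finset.range (k+1), ∫⁻ x, Ψ i x y ∂(volume.restrict Ω)) ∂(volume.restrict Ω) :=
            lintegral_mono_ae hae
        _ = ENNReal.ofReal CS * ∫⁻ y, (∑ i ∈ Finset.range (k+1), ∫⁻ x, Ψ i x y ∂(volume.restrict Ω)) ∂(volume.restrict Ω) :=
            lintegral_const_mul' _ _ ENNReal.ofReal_ne_top
        _ = ENNReal.ofReal CS * ∑ i ∈ Finset.range (k+1), ∫⁻ y, (∫⁻ x, Ψ i x y ∂(volume.restrict Ω)) ∂(volume.restrict Ω) := by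
            rw [lintegral_finset_sum' _ (fun i hi =>
              haeLI i (Nat.lt_succ_iff.mp (Finset.mem_range.mp hi)))]
    have step2 : ∀ i, i ≤ k →
        ∫⁻ y, (∫⁻ x, Ψ i x y ∂(volume.restrict Ω)) ∂(volume.restrict Ω) ≤ ENNReal.ofReal (vΩ * (P i * (B * ‖f‖)^2)) := by
      intro i hik
      rw [show ∫⁻ y, (∫⁻ x, Ψ i x y ∂(volume.restrict Ω)) ∂(volume.restrict Ω) = ∫⁻ x, (∫⁻ y, Ψ i x y ∂(volume.restrict Ω)) ∂(volume.restrict Ω) from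
        lintegral_lintegral_swap (hΨswap i hik)]
      calc ∫⁻ x, (∫⁻ y, Ψ i x y ∂(volume.restrict Ω)) ∂(volume.restrict Ω)
          ≤ ∫⁻ _x, ENNReal.ofReal (P i * (B * ‖f‖)^2) ∂(volume.restrict Ω) := by
            refine lintegral_mono_ae ?_
            filter_upwards [ae_restrict_mem hΩm] with x hx
            exact hpoint i hik x hx
        _ = ENNReal.ofReal (P i * (B * ‖f‖)^2) * volume Ω := by
            rw [lintegral_const, Measure.restrict_apply_univ]
        _ = ENNReal.ofReal (vΩ * (P i * (B * ‖f‖)^2)) := by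
            rw [show volume Ω = ENNReal.ofReal vΩ by
              rw [hvΩ, ENNReal.ofReal_toReal hΩfin]]
            rw [← ENNReal.ofReal_mul (by positivity)]
            rw [mul_comm]
    refine step1.trans ?_
    calc ENNReal.ofReal CS * ∑ i ∈ Finset.range (k+1), ∫⁻ y, (∫⁻ x, Ψ i x y ∂(volume.restrict Ω)) ∂(volume.restrict Ω)
        ≤ ENNReal.ofReal CS * ∑ i ∈ Finset.range (k+1),
            ENNReal.ofReal (vΩ * (P i * (B * ‖f‖)^2)) :=
          mul_le_mul_right (Finset.sum_le_sum fun i hi =>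
            step2 i (Nat.lt_succ_iff.mp (Finset.mem_range.mp hi))) _
      _ = ENNReal.ofReal (CS * ∑ i ∈ Finset.range (k+1), vΩ * (P i * (B * ‖f‖)^2)) := by
          rw [ENNReal.ofReal_mul hCS.le,
            ENNReal.ofReal_sum_of_nonneg (fun i _ => by positivity)]
      _ ≤ ENNReal.ofReal (((Real.sqrt D + 1) * ‖f‖)^2) := by
          refine ENNReal.ofReal_le_ofReal ?_
          have hsum : ∑ i ∈ Finset.range (k+1), vΩ * (P i * (B * ‖f‖)^2)
              = vΩ * Q * (B * ‖f‖)^2 := by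
            have hterm : ∀ i ∈ Finset.range (k+1),
                vΩ * (P i * (B * ‖f‖)^2) = (vΩ * (B * ‖f‖)^2) * P i := fun i _ => by ring
            rw [Finset.sum_congr rfl hterm, ← Finset.mul_sum, ← hQ]
            ring
          rw [hsum]
          have hDval : CS * (vΩ * Q * (B * ‖f‖)^2) = D * ‖f‖^2 := by
            rw [hD]; ring
          rw [hDval]
          nlinarith [Real.sq_sqrt hD0, Real.sqrt_nonneg D, sq_nonneg ‖f‖, norm_nonneg f,
            mul_nonneg (Real.sqrt_nonneg D) (norm_nonneg f)]
  have heLp : eLpNorm Fs 2 (volume.restrict Ω) ≤ ENNReal.ofReal ((Real.sqrt D + 1) * ‖f‖) :=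
    eLpNorm_le_of_lintegral_sq (by positivity) hmain
  constructor
  · exact ⟨hFm, lt_of_le_of_lt heLp ENNReal.ofReal_lt_top⟩
  · have h := ENNReal.toReal_mono ENNReal.ofReal_ne_top heLp
    rwa [ENNReal.toReal_ofReal (by positivity)] at h
end
end
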